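/- For any simple graph G on [n], the binomial edge ideal J_G equals the intersection ∩_{S ⊆ [n]} P_S(G) over all subsets S of [n]; in particular J_G is a radical ideal. -/

import Mathlib

open MvPolynomial SimpleGraph Classical
open scoped BigOperators

noncomputable section BinomialEdgeIdeals

variable (K : Type*) [Field K]

/-- `f i j = x_i y_j - x_j y_i` in `S = K[x_v, y_v : v ∈ V]`, where
`x_v = X (Sum.inl v)` and `y_v = X (Sum.inr v)`. -/
def fij {V : Type*} (i j : V) : MvPolynomial (V ⊕ V) K :=
  X (Sum.inl i) * X (Sum.inr j) - X (Sum.inl j) * X (Sum.inr i)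

/-- The binomial edge ideal of a simple graph `G` on a linearly ordered vertex set. -/
def beIdeal {V : Type*} [LinearOrder V] (G : SimpleGraph V) :
    Ideal (MvPolynomial (V ⊕ V) K) :=
  Ideal.span { f | ∃ i j : V, i < j ∧ G.Adj i j ∧ f = fij K i j }

/-- Exponent vectors, compared lexicographically with
`x_1 > x_2 > ⋯ > x_n > y_1 > ⋯ > y_n`: the variable `x_i` is encoded as
`i - 1 ∈ Fin (n+n)` and `y_i` as `n + i - 1`, and a *smaller* code means a *bigger*
variable, so the `Finsupp.Lex` order (which compares at the smallest differing index)
is exactly the lexicographic monomial order induced by this order of the variables. -/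
def expLex {n : ℕ} (m : (Fin n ⊕ Fin n) →₀ ℕ) : Lex (Fin (n + n) →₀ ℕ) :=
  toLex (Finsupp.equivMapDomain finSumFinEquiv m)

/-- The leading exponent (largest exponent vector in the support, in the lexicographic
order `x_1 > ⋯ > x_n > y_1 > ⋯ > y_n`) of a polynomial; junk value `0` for `p = 0`. -/
def leadExp {n : ℕ} (p : MvPolynomial (Fin n ⊕ Fin n) K) : (Fin n ⊕ Fin n) →₀ ℕ :=
  Finsupp.equivMapDomain finSumFinEquiv.symm
    (ofLex (WithBot.unbotD (toLex 0) (p.support.image (fun m => expLex m)).max))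

/-- The initial ideal of `I` with respect to the lexicographic order induced by
`x_1 > ⋯ > x_n > y_1 > ⋯ > y_n`. -/
def initialIdeal {n : ℕ} (I : Ideal (MvPolynomial (Fin n ⊕ Fin n) K)) :
    Ideal (MvPolynomial (Fin n ⊕ Fin n) K) :=
  Ideal.span { q | ∃ p ∈ I, p ≠ 0 ∧ q = monomial (leadExp K p) (1 : K) }

/-- The graded maximal ideal, generated by all the variables. -/
def varIdeal (V : Type*) : Ideal (MvPolynomial (V ⊕ V) K) :=
  Ideal.span (Set.range X)

/-- `depth (S/I)`: the supremum of the lengths of regular sequences on `S/I`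
consisting of elements of the graded maximal ideal. -/
def quotDepth {V : Type*} (I : Ideal (MvPolynomial (V ⊕ V) K)) : ℕ :=
  sSup { k | ∃ rs : List (MvPolynomial (V ⊕ V) K), rs.length = k ∧
    (∀ r ∈ rs, r ∈ varIdeal K V) ∧
    RingTheory.Sequence.IsRegular (MvPolynomial (V ⊕ V) K ⧸ I) rs }

/-- `p` is homogeneous of degree `d ∈ ℤ` (the zero polynomial having every degree). -/
def IsHomogInt {σ : Type*} (p : MvPolynomial σ K) (d : ℤ) : Prop :=
  p = 0 ∨ ∃ m : ℕ, (m : ℤ) = d ∧ p.IsHomogeneous m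

/-- A graded free resolution of `S/I`: free modules `F i = ⊕_j S(-j)^{b i j}`
(with basis indexed by `Σ j : ℤ, Fin (b i j)`), degree-zero (i.e. twist-compatible
homogeneous) differentials, exact, augmented by a degree-zero surjection onto `S ⧸ I`. -/
structure GradedFreeResolution {σ : Type*} (I : Ideal (MvPolynomial σ K)) where
  b : ℕ → ℤ →₀ ℕ
  diff : ∀ i : ℕ, ((Σ j : ℤ, Fin (b (i + 1) j)) →₀ MvPolynomial σ K) →ₗ[MvPolynomial σ K]
      ((Σ j : ℤ, Fin (b i j)) →₀ MvPolynomial σ K)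
  aug : ((Σ j : ℤ, Fin (b 0 j)) →₀ MvPolynomial σ K) →ₗ[MvPolynomial σ K]
      (MvPolynomial σ K ⧸ I)
  homog : ∀ (i : ℕ) (j : ℤ) (k : Fin (b (i + 1) j)) (j' : ℤ) (k' : Fin (b i j')),
    IsHomogInt K ((diff i (Finsupp.single ⟨j, k⟩ 1)) ⟨j', k'⟩) (j - j')
  aug_homog : ∀ (j : ℤ) (k : Fin (b 0 j)), ∃ p : MvPolynomial σ K,
    IsHomogInt K p j ∧ aug (Finsupp.single ⟨j, k⟩ 1) = Ideal.Quotient.mk I p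
  aug_surj : Function.Surjective aug
  exact_zero : Function.Exact (diff 0) aug
  exact_succ : ∀ i : ℕ, Function.Exact (diff (i + 1)) (diff i)

/-- The Castelnuovo–Mumford regularity of `S/I`: the least `r` such that `S/I` admits a
graded free resolution with all `i`-th syzygies generated in degrees `≤ i + r` (the
minimal graded free resolution realizes this minimum). -/
def regQuot {σ : Type*} (I : Ideal (MvPolynomial σ K)) : ℤ :=
  sInf { r : ℤ | ∃ F : GradedFreeResolution K I, ∀ i j, F.b i j ≠ 0 → j ≤ i + r }

/- ### Graph-theoretic notions -/

/-- `s` is a maximal clique of `G`. -/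
def IsMaxClique {V : Type*} (G : SimpleGraph V) (s : Finset V) : Prop :=
  G.IsClique ↑s ∧ ∀ t : Finset V, G.IsClique ↑t → s ⊆ t → s = t

/-- A graph is chordal if it has no induced cycle of length `≥ 4`. -/
def Chordal {V : Type*} (G : SimpleGraph V) : Prop :=
  ∀ m : ℕ, 4 ≤ m → IsEmpty (cycleGraph m ↪g G)

/-- A block graph: a chordal graph in which any two distinct maximal cliques meet in at
most one vertex. -/
def IsBlockGraph {V : Type*} (G : SimpleGraph V) : Prop :=
  Chordal G ∧ ∀ s t : Finset V, IsMaxClique G s → IsMaxClique G t → s ≠ t →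
    (s ∩ t).card ≤ 1

/-- The conditions (i) and (ii) defining a `C_ℓ`-graph, for a given sequence of cliques
`F 0, …, F (ℓ-1)`: each `F i` is a maximal clique with at least `2` vertices, consecutive
cliques meet in exactly one vertex, non-consecutive cliques are disjoint, and every edge
of `G` either lies in some `F i` or is a pendant edge `{j, k}` attached at an
intersection point `j` of two consecutive cliques, with `k` of degree `1`. -/
def IsCliqueSeq {V : Type*} (G : SimpleGraph V) (ℓ : ℕ) (F : Fin ℓ → Finset V) : Prop :=
  (∀ i, IsMaxClique G (F i) ∧ 2 ≤ (F i).card) ∧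
  (∀ i : Fin ℓ, ∀ h : i.val + 1 < ℓ, (F i ∩ F ⟨i.val + 1, h⟩).card = 1) ∧
  (∀ i j : Fin ℓ, i < j → j.val ≠ i.val + 1 → F i ∩ F j = ∅) ∧
  (∀ e ∈ G.edgeSet, (∃ i, ∀ v ∈ e, v ∈ F i) ∨
    (∃ (jv kv : V) (i : Fin ℓ) (h : i.val + 1 < ℓ), e = s(jv, kv) ∧
      jv ∈ F i ∩ F ⟨i.val + 1, h⟩ ∧ (G.neighborSet kv).ncard = 1))

/-- A `C_ℓ`-graph. -/
def IsCLGraph {V : Type*} (G : SimpleGraph V) (ℓ : ℕ) : Prop :=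
  G.Connected ∧ ∃ F : Fin ℓ → Finset V, IsCliqueSeq G ℓ F

/-- `G` has an induced path of length `k` (an induced subgraph isomorphic to the path
graph with `k` edges). -/
def HasInducedPathLen {V : Type*} (G : SimpleGraph V) (k : ℕ) : Prop :=
  Nonempty (pathGraph (k + 1) ↪g G)

/-- The longest induced path of `G` has length `ℓ`. -/
def LongestInducedPathLen {V : Type*} (G : SimpleGraph V) (ℓ : ℕ) : Prop :=
  HasInducedPathLen G ℓ ∧ ∀ k, HasInducedPathLen G k → k ≤ ℓ

/-- The longest path of `G` has length `ℓ`. -/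
def LongestPathLen {V : Type*} (G : SimpleGraph V) (ℓ : ℕ) : Prop :=
  (∃ (u v : V) (p : G.Walk u v), p.IsPath ∧ p.length = ℓ) ∧
  ∀ (u v : V) (p : G.Walk u v), p.IsPath → p.length ≤ ℓ

/-- A caterpillar tree: a tree containing a path `P` such that every vertex is a vertex
of `P` or adjacent to a vertex of `P`. -/
def IsCaterpillar {V : Type*} (T : SimpleGraph V) : Prop :=
  T.IsTree ∧ ∃ (u v : V) (p : T.Walk u v), p.IsPath ∧
    ∀ w : V, w ∈ p.support ∨ ∃ z ∈ p.support, T.Adj w z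

/-- The spider tree on `ℓ + 3` vertices: a path `0 — 1 — ⋯ — ℓ` together with a path
`k — (ℓ+1) — (ℓ+2)` of length 2 attached at the vertex `k`. -/
def spider (ℓ k : ℕ) : SimpleGraph (Fin (ℓ + 3)) :=
  SimpleGraph.fromRel (fun a b =>
    (a.val + 1 = b.val ∧ b.val ≤ ℓ) ∨ (a.val = k ∧ b.val = ℓ + 1) ∨
    (a.val = ℓ + 1 ∧ b.val = ℓ + 2))

/-- The graph obtained from `G` by deleting the vertices in `T` (keeping the ambient
vertex set: the vertices of `T` simply become isolated). -/
def delVerts {V : Type*} (G : SimpleGraph V) (T : Set V) : SimpleGraph V where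
  Adj a b := G.Adj a b ∧ a ∉ T ∧ b ∉ T
  symm := ⟨fun a b h => ⟨h.1.symm, h.2.2, h.2.1⟩⟩
  loopless := ⟨fun a h => G.loopless.irrefl a h.1⟩

/-- The prime ideal `P_T(G)`: generated by `x_i, y_i` for `i ∈ T`, together with the
binomial edge ideals of the complete graphs on the connected components of the
restriction of `G` to the complement of `T`. -/
def cutPrime {V : Type*} [LinearOrder V] (G : SimpleGraph V) (T : Set V) :
    Ideal (MvPolynomial (V ⊕ V) K) :=
  Ideal.span ({ q | ∃ i ∈ T, q = X (Sum.inl i) ∨ q = X (Sum.inr i) } ∪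
    { q | ∃ i j : V, i < j ∧ i ∉ T ∧ j ∉ T ∧ (delVerts G T).Reachable i j ∧
      q = fij K i j })

/-- `c(T)`: the number of connected components of the restriction of `G` to the
complement of `T`. -/
def numComp {V : Type*} (G : SimpleGraph V) (T : Set V) : ℕ :=
  Nat.card ((G.induce Tᶜ).ConnectedComponent)

/-- `F 0, …, F (r-1)` is a leaf order on the maximal cliques of `G`: it enumerates them
without repetition, and each `F k` with `k > 0` is a leaf of the simplicial complex
generated by `F 0, …, F k`, i.e. admits a branch `F b`, `b < k`. -/
def IsLeafOrder {V : Type*} (G : SimpleGraph V) (r : ℕ) (F : Fin r → Finset V) : Prop :=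
  Function.Injective F ∧ (Set.range F = { s | IsMaxClique G s }) ∧
  ∀ k : Fin r, 0 < k.val → ∃ b : Fin r, b < k ∧
    ∀ m : Fin r, m < k → F m ∩ F k ⊆ F b ∩ F k

/-- An admissible path from `i` to `j` (`i < j`) in `G`: a path (recorded as its list of
vertices) with pairwise distinct vertices, whose interior vertices `v` all satisfy
`v < i` or `v > j`, and which is minimal: no proper subsequence with the same endpoints
is again a path of `G`. -/
def IsAdmissiblePath {n : ℕ} (G : SimpleGraph (Fin n)) (i j : Fin n)
    (π : List (Fin n)) : Prop :=
  i < j ∧ π.Chain' G.Adj ∧ π.head? = some i ∧ π.getLast? = some j ∧ π.Nodup ∧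
  (∀ v ∈ π, v ≠ i → v ≠ j → (v < i ∨ j < v)) ∧
  ∀ π' : List (Fin n), π' ≠ π → π'.Sublist π → π'.head? = some i →
    π'.getLast? = some j → ¬ π'.Chain' G.Adj

/-- `u_π = (∏_{v ∈ π, v > j} x_v) (∏_{v ∈ π, v < i} y_v)` for a path `π` from `i` to `j`. -/
def uPath {n : ℕ} (i j : Fin n) (π : List (Fin n)) : MvPolynomial (Fin n ⊕ Fin n) K :=
  ((π.filter (fun v => j < v)).map (fun v => X (Sum.inl v))).prod *
  ((π.filter (fun v => v < i)).map (fun v => X (Sum.inr v))).prod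

/-- `Γ` is the reduced Gröbner basis of `I` with respect to the lexicographic order
`x_1 > ⋯ > x_n > y_1 > ⋯ > y_n`: `Γ ⊆ I`, all elements are monic, the leading monomials
of `Γ` generate the initial ideal of `I`, and no monomial of an element of `Γ` is
divisible by the leading monomial of another element. -/
def IsReducedGB {n : ℕ} (Γ : Set (MvPolynomial (Fin n ⊕ Fin n) K))
    (I : Ideal (MvPolynomial (Fin n ⊕ Fin n) K)) : Prop :=
  Γ ⊆ (I : Set (MvPolynomial (Fin n ⊕ Fin n) K)) ∧
  (∀ g ∈ Γ, g ≠ 0 ∧ MvPolynomial.coeff (leadExp K g) g = 1) ∧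
  initialIdeal K I = Ideal.span ((fun g => (monomial (leadExp K g) (1 : K))) '' Γ) ∧
  ∀ g ∈ Γ, ∀ g' ∈ Γ, g' ≠ g → ∀ m ∈ g.support, ¬ leadExp K g' ≤ m

end BinomialEdgeIdeals

attribute [reducible] delVerts

noncomputable section Aux
open Sum
variable {K : Type*} [Field K] {V : Type*} [LinearOrder V]

lemma fij_mem {G : SimpleGraph V} {i j : V} (h : G.Adj i j) :
    fij K i j ∈ beIdeal K G := by
  rcases lt_trichotomy i j with hlt | heq | hgt
  · exact Ideal.subset_span ⟨i, j, hlt, h, rfl⟩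
  · exact absurd heq h.ne
  · have he : fij K i j = -fij K j i := by unfold fij; ring
    rw [he]; exact neg_mem (Ideal.subset_span ⟨j, i, hgt, h.symm, rfl⟩)

lemma beIdeal_mono {G G' : SimpleGraph V} (h : G ≤ G') :
    beIdeal K G ≤ beIdeal K G' := by
  apply Ideal.span_mono
  rintro f ⟨i, j, h1, h2, h3⟩
  exact ⟨i, j, h1, h h2, h3⟩

variable {n : ℕ}

/-- substitution sending `x_v, y_v` to 0 and every other variable to itself -/
def phiv (K : Type*) [Field K] (n : ℕ) (v : Fin n) :
    MvPolynomial (Fin n ⊕ Fin n) K →ₐ[K] MvPolynomial (Fin n ⊕ Fin n) K :=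
  aeval (fun s => if s = Sum.inl v ∨ s = Sum.inr v then 0 else X s)

/-- the ideal `(x_v, y_v)` -/
def Mv (K : Type*) [Field K] (n : ℕ) (v : Fin n) : Ideal (MvPolynomial (Fin n ⊕ Fin n) K) :=
  Ideal.span {X (Sum.inl v), X (Sum.inr v)}

lemma phiv_X_inl (v : Fin n) : phiv K n v (X (inl v)) = 0 := by
  simp [phiv]

lemma phiv_X_inr (v : Fin n) : phiv K n v (X (inr v)) = 0 := by
  simp [phiv]

lemma phiv_X_ne (v : Fin n) {s : Fin n ⊕ Fin n} (h1 : s ≠ inl v) (h2 : s ≠ inr v) :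
    phiv K n v (X s) = X s := by
  simp [phiv, h1, h2]

lemma sub_phiv_mem (v : Fin n) (f : MvPolynomial (Fin n ⊕ Fin n) K) :
    f - phiv K n v f ∈ Mv K n v := by
  induction f using MvPolynomial.induction_on with
  | C a => simp [phiv]
  | add p q hp hq =>
      have : p + q - phiv K n v (p + q) = (p - phiv K n v p) + (q - phiv K n v q) := by
        rw [map_add]; ring
      rw [this]; exact add_mem hp hq
  | mul_X p s hp =>
      have : p * X s - phiv K n v (p * X s)
          = (p - phiv K n v p) * X s + phiv K n v p * (X s - phiv K n v (X s)) := by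
        rw [map_mul]; ring
      rw [this]
      refine add_mem (Ideal.mul_mem_right _ _ hp) (Ideal.mul_mem_left _ _ ?_)
      by_cases h1 : s = inl v
      · subst h1; rw [phiv_X_inl, sub_zero]; exact Ideal.subset_span (by simp)
      by_cases h2 : s = inr v
      · subst h2; rw [phiv_X_inr, sub_zero]; exact Ideal.subset_span (by simp)
      · rw [phiv_X_ne v h1 h2, sub_self]; exact zero_mem _

lemma phiv_eq_zero_of_mem (v : Fin n) {f : MvPolynomial (Fin n ⊕ Fin n) K}
    (h : f ∈ Mv K n v) : phiv K n v f = 0 := by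
  rw [Mv, Ideal.mem_span_pair] at h
  obtain ⟨a, b, rfl⟩ := h
  simp [phiv]

lemma phiv_mem_of_forall (v : Fin n) {s : Set (MvPolynomial (Fin n ⊕ Fin n) K)}
    {I : Ideal (MvPolynomial (Fin n ⊕ Fin n) K)} (hs : ∀ g ∈ s, phiv K n v g ∈ I)
    {f : MvPolynomial (Fin n ⊕ Fin n) K} (hf : f ∈ Ideal.span s) :
    phiv K n v f ∈ I := by
  have h1 : phiv K n v f ∈ Ideal.map (phiv K n v).toRingHom (Ideal.span s) :=
    Ideal.mem_map_of_mem _ hf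
  rw [Ideal.map_span] at h1
  refine Ideal.span_le.mpr ?_ h1
  rintro q ⟨g, hg, rfl⟩
  exact hs g hg

lemma phiv_fij (v : Fin n) {i j : Fin n} (hi : i ≠ v) (hj : j ≠ v) :
    phiv K n v (fij K i j) = fij K i j := by
  unfold fij
  rw [map_sub, map_mul, map_mul,
    phiv_X_ne v (by simp [hi]) (by simp), phiv_X_ne v (by simp) (by simp [hj]),
    phiv_X_ne v (by simp [hj]) (by simp), phiv_X_ne v (by simp) (by simp [hi])]

lemma fij_mem_Mv_left (v : Fin n) (j : Fin n) : fij K v j ∈ Mv K n v := by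
  rw [Mv, Ideal.mem_span_pair]
  exact ⟨X (inr j), -X (inl j), by unfold fij; ring⟩

lemma fij_mem_Mv_right (v : Fin n) (i : Fin n) : fij K i v ∈ Mv K n v := by
  rw [Mv, Ideal.mem_span_pair]
  exact ⟨-X (inr i), X (inl i), by unfold fij; ring⟩

end Aux

noncomputable section GraphAux
open Sum SimpleGraph
variable {V : Type*}

lemma reachable_of_adj_reachable {H H' : SimpleGraph V}
    (hb : ∀ a b, H.Adj a b → H'.Reachable a b) {i j : V} (h : H.Reachable i j) :
    H'.Reachable i j := by
  obtain ⟨w⟩ := h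
  induction w with
  | nil => exact Reachable.refl _
  | cons ha _ ih => exact (hb _ _ ha).trans ih

lemma delVerts_delVerts (G : SimpleGraph V) (A B : Set V) :
    delVerts (delVerts G A) B = delVerts G (A ∪ B) := by
  ext a b
  unfold delVerts
  simp only [Set.mem_union]
  tauto

/-- rerouting around a simplicial vertex -/
lemma reach_del_insert {H : SimpleGraph V}
    {v : V} (hs : ∀ a b, H.Adj v a → H.Adj v b → a ≠ b → H.Adj a b) (U : Set V) :
    ∀ (L : ℕ) (i j : V), i ≠ v → j ≠ v → ∀ (p : (delVerts H U).Walk i j),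
      p.length ≤ L → (delVerts H (U ∪ {v})).Reachable i j := by
  intro L
  induction L with
  | zero =>
    intro i j hi hj p hl
    cases p with
    | nil => exact Reachable.refl _
    | cons ha p' => simp [SimpleGraph.Walk.length_cons] at hl
  | succ L ih =>
    intro i j hi hj p hl
    cases p with
    | nil => exact Reachable.refl _
    | @cons _ k _ ha p' =>
      by_cases hk : k = v
      · subst hk
        cases p' with
        | nil => exact absurd rfl hj
        | @cons _ k2 _ ha2 p2 =>
          have hk2v : k2 ≠ k := fun h => (delVerts H U).loopless.irrefl k (h ▸ ha2)
          have hlen : p2.length ≤ L := by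
            simp [SimpleGraph.Walk.length_cons] at hl; omega
          by_cases hik2 : i = k2
          · subst hik2
            exact ih i j hi hj p2 hlen
          · have hadj : H.Adj i k2 := hs i k2 ha.1.symm ha2.1 hik2
            have h1 : (delVerts H (U ∪ {k})).Adj i k2 :=
              ⟨hadj, by simp [ha.2.1, hi], by simp [ha2.2.2, hk2v]⟩
            exact (h1.reachable).trans (ih k2 j hk2v hj p2 hlen)
      · have h1 : (delVerts H (U ∪ {v})).Adj i k :=
          ⟨ha.1, by simp [ha.2.1, hi], by simp [ha.2.2, hk]⟩
        have hlen : p'.length ≤ L := by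
          simp [SimpleGraph.Walk.length_cons] at hl; omega
        exact (h1.reachable).trans (ih k j hk hj p' hlen)

/-- in a graph all whose vertices are simplicial, reachable implies equal or adjacent -/
lemma cluster_reach {H : SimpleGraph V}
    (hs : ∀ v a b, H.Adj v a → H.Adj v b → a ≠ b → H.Adj a b) {i j : V}
    (h : H.Reachable i j) : i = j ∨ H.Adj i j := by
  obtain ⟨w⟩ := h
  induction w with
  | nil => exact Or.inl rfl
  | @cons a k c ha _ ih =>
    rcases ih with rfl | hadj
    · exact Or.inr ha
    · by_cases hac : a = c
      · exact Or.inl hac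
      · exact Or.inr (hs k a c ha.symm hadj hac)

lemma isolated_reach {G : SimpleGraph V} {v : V} (hv : ∀ a, ¬ G.Adj v a) {j : V}
    (h : G.Reachable v j) : v = j := by
  obtain ⟨w⟩ := h
  cases w with
  | nil => rfl
  | cons ha _ => exact absurd ha (hv _)

end GraphAux

noncomputable section CutAux
open Sum SimpleGraph MvPolynomial
variable {K : Type*} [Field K] {n : ℕ}

/-- the graph `G` with the neighbourhood of `v` completed to a clique -/
def Gcomp (G : SimpleGraph (Fin n)) (v : Fin n) : SimpleGraph (Fin n) :=
  G ⊔ SimpleGraph.fromRel (fun a b => G.Adj v a ∧ G.Adj v b)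

lemma Gcomp_adj {G : SimpleGraph (Fin n)} {v a b : Fin n} :
    (Gcomp G v).Adj a b ↔ G.Adj a b ∨ (a ≠ b ∧ G.Adj v a ∧ G.Adj v b) := by
  simp only [Gcomp, SimpleGraph.sup_adj, SimpleGraph.fromRel_adj]
  tauto

lemma le_Gcomp {G : SimpleGraph (Fin n)} {v : Fin n} : G ≤ Gcomp G v := le_sup_left

lemma Gcomp_adj_v {G : SimpleGraph (Fin n)} {v a : Fin n} :
    (Gcomp G v).Adj v a ↔ G.Adj v a := by
  rw [Gcomp_adj]
  constructor
  · rintro (h | ⟨_, h1, h2⟩)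
    · exact h
    · exact absurd h1 (G.loopless.irrefl v)
  · exact Or.inl

lemma Gcomp_simplicial {G : SimpleGraph (Fin n)} {v : Fin n} :
    ∀ a b, (Gcomp G v).Adj v a → (Gcomp G v).Adj v b → a ≠ b → (Gcomp G v).Adj a b := by
  intro a b ha hb hab
  rw [Gcomp_adj_v] at ha hb
  exact Gcomp_adj.mpr (Or.inr ⟨hab, ha, hb⟩)

lemma beIdeal_le_cutPrime (G : SimpleGraph (Fin n)) (T : Set (Fin n)) :
    beIdeal K G ≤ cutPrime K G T := by
  rw [beIdeal, Ideal.span_le]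
  rintro f ⟨i, j, hij, hadj, rfl⟩
  by_cases hi : i ∈ T
  · have hx : X (inl i) ∈ cutPrime K G T :=
      Ideal.subset_span (Or.inl ⟨i, hi, Or.inl rfl⟩)
    have hy : X (inr i) ∈ cutPrime K G T :=
      Ideal.subset_span (Or.inl ⟨i, hi, Or.inr rfl⟩)
    exact sub_mem (Ideal.mul_mem_right _ _ hx) (Ideal.mul_mem_left _ _ hy)
  by_cases hj : j ∈ T
  · have hx : X (inl j) ∈ cutPrime K G T :=
      Ideal.subset_span (Or.inl ⟨j, hj, Or.inl rfl⟩)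
    have hy : X (inr j) ∈ cutPrime K G T :=
      Ideal.subset_span (Or.inl ⟨j, hj, Or.inr rfl⟩)
    exact sub_mem (Ideal.mul_mem_left _ _ hy) (Ideal.mul_mem_right _ _ hx)
  · exact Ideal.subset_span (Or.inr ⟨i, j, hij, hi, hj,
      SimpleGraph.Adj.reachable ⟨hadj, hi, hj⟩, rfl⟩)

lemma cutPrime_congr {G G' : SimpleGraph (Fin n)} (T : Set (Fin n))
    (h : ∀ i j, (delVerts G T).Reachable i j ↔ (delVerts G' T).Reachable i j) :
    cutPrime K G T = cutPrime K G' T := by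
  unfold cutPrime
  congr 1
  ext q
  simp only [Set.mem_union, Set.mem_setOf_eq]
  constructor
  · rintro (hv | ⟨i, j, h1, h2, h3, h4, h5⟩)
    · exact Or.inl hv
    · exact Or.inr ⟨i, j, h1, h2, h3, (h i j).mp h4, h5⟩
  · rintro (hv | ⟨i, j, h1, h2, h3, h4, h5⟩)
    · exact Or.inl hv
    · exact Or.inr ⟨i, j, h1, h2, h3, (h i j).mpr h4, h5⟩

lemma reach_Gcomp {G : SimpleGraph (Fin n)} {v : Fin n} {T : Set (Fin n)} (hvT : v ∉ T)
    (i j : Fin n) :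
    (delVerts G T).Reachable i j ↔ (delVerts (Gcomp G v) T).Reachable i j := by
  constructor
  · refine reachable_of_adj_reachable (fun a b hab => ?_)
    exact SimpleGraph.Adj.reachable ⟨le_Gcomp hab.1, hab.2.1, hab.2.2⟩
  · refine reachable_of_adj_reachable (fun a b hab => ?_)
    obtain ⟨hadj, haT, hbT⟩ := hab
    rcases Gcomp_adj.mp hadj with h | ⟨hne, hva, hvb⟩
    · exact SimpleGraph.Adj.reachable ⟨h, haT, hbT⟩
    · have h1 : (delVerts G T).Adj a v := ⟨hva.symm, haT, hvT⟩
      have h2 : (delVerts G T).Adj v b := ⟨hvb, hvT, hbT⟩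
      exact h1.reachable.trans h2.reachable

lemma cutPrime_erase_le {H : SimpleGraph (Fin n)} {v : Fin n}
    (hs : ∀ a b, H.Adj v a → H.Adj v b → a ≠ b → H.Adj a b)
    {T : Set (Fin n)} (hvT : v ∈ T) :
    cutPrime K H (T \ {v}) ≤ cutPrime K H T := by
  rw [cutPrime, Ideal.span_le]
  rintro q (⟨i, hi, h⟩ | ⟨i, j, hij, hiT, hjT, hreach, rfl⟩)
  · exact Ideal.subset_span (Or.inl ⟨i, hi.1, h⟩)
  · have hxv : X (inl v) ∈ cutPrime K H T :=
      Ideal.subset_span (Or.inl ⟨v, hvT, Or.inl rfl⟩)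
    have hyv : X (inr v) ∈ cutPrime K H T :=
      Ideal.subset_span (Or.inl ⟨v, hvT, Or.inr rfl⟩)
    by_cases hi : i = v
    · subst hi
      exact sub_mem (Ideal.mul_mem_right _ _ hxv) (Ideal.mul_mem_left _ _ hyv)
    by_cases hj : j = v
    · subst hj
      exact sub_mem (Ideal.mul_mem_left _ _ hyv) (Ideal.mul_mem_right _ _ hxv)
    · obtain ⟨p⟩ := hreach
      have hre := reach_del_insert hs (T \ {v}) p.length i j hi hj p le_rfl
      have hset : (T \ {v}) ∪ {v} = T := by
        rw [Set.diff_union_self, Set.union_eq_self_of_subset_right]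
        simpa using hvT
      rw [hset] at hre
      have hiT' : i ∉ T := fun hmem => hiT ⟨hmem, hi⟩
      have hjT' : j ∉ T := fun hmem => hjT ⟨hmem, hj⟩
      exact Ideal.subset_span (Or.inr ⟨i, j, hij, hiT', hjT', hre, rfl⟩)

lemma phiv_cutPrime_insert {G : SimpleGraph (Fin n)} {v : Fin n} {T : Set (Fin n)}
    {f : MvPolynomial (Fin n ⊕ Fin n) K} (hf : f ∈ cutPrime K G (T ∪ {v})) :
    phiv K n v f ∈ cutPrime K (delVerts G {v}) T := by
  refine phiv_mem_of_forall v ?_ hf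
  rintro q (⟨i, hiT, h⟩ | ⟨i, j, hij, hiT, hjT, hreach, rfl⟩)
  · by_cases hi : i = v
    · subst hi
      rcases h with rfl | rfl
      · rw [phiv_X_inl]; exact zero_mem _
      · rw [phiv_X_inr]; exact zero_mem _
    · have hiT' : i ∈ T := by
        rcases hiT with h' | h'
        · exact h'
        · exact absurd h' hi
      rcases h with rfl | rfl
      · rw [phiv_X_ne v (by simp [hi]) (by simp)]
        exact Ideal.subset_span (Or.inl ⟨i, hiT', Or.inl rfl⟩)
      · rw [phiv_X_ne v (by simp) (by simp [hi])]
        exact Ideal.subset_span (Or.inl ⟨i, hiT', Or.inr rfl⟩)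
  · have hiv : i ≠ v := fun h => hiT (by simp [h])
    have hjv : j ≠ v := fun h => hjT (by simp [h])
    have hiT' : i ∉ T := fun h => hiT (Or.inl h)
    have hjT' : j ∉ T := fun h => hjT (Or.inl h)
    rw [phiv_fij v hiv hjv]
    have hgr : delVerts G (T ∪ {v}) = delVerts (delVerts G {v}) T := by
      rw [delVerts_delVerts, Set.union_comm]
    rw [hgr] at hreach
    exact Ideal.subset_span (Or.inr ⟨i, j, hij, hiT', hjT', hreach, rfl⟩)

lemma cutPrime_empty_cluster {G : SimpleGraph (Fin n)}
    (hs : ∀ v a b, G.Adj v a → G.Adj v b → a ≠ b → G.Adj a b) :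
    cutPrime K G (∅ : Set (Fin n)) = beIdeal K G := by
  refine le_antisymm ?_ (beIdeal_le_cutPrime G ∅)
  rw [cutPrime, Ideal.span_le]
  rintro q (⟨i, hi, _⟩ | ⟨i, j, hij, _, _, hreach, rfl⟩)
  · exact absurd hi (Set.notMem_empty i)
  · have hre : G.Reachable i j := by
      refine reachable_of_adj_reachable (fun a b hab => ?_) hreach
      exact hab.1.reachable
    rcases cluster_reach hs hre with rfl | hadj
    · exact absurd rfl hij.ne
    · exact fij_mem hadj

end CutAux

noncomputable section Ohtani
open Sum SimpleGraph MvPolynomial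
variable {K : Type*} [Field K] {n : ℕ}

lemma delVerts_le (G : SimpleGraph (Fin n)) (T : Set (Fin n)) : delVerts G T ≤ G :=
  fun _ _ hab => hab.1

lemma mul_var_mem {G : SimpleGraph (Fin n)} {v i j : Fin n}
    (hadj : (Gcomp G v).Adj i j) :
    X (inl v) * fij K i j ∈ beIdeal K G ∧ X (inr v) * fij K i j ∈ beIdeal K G := by
  rcases Gcomp_adj.mp hadj with h | ⟨hne, hvi, hvj⟩
  · exact ⟨Ideal.mul_mem_left _ _ (fij_mem h), Ideal.mul_mem_left _ _ (fij_mem h)⟩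
  · constructor
    · have hid : X (inl v) * fij K i j
          = X (inl i) * fij K v j - X (inl j) * fij K v i := by
        unfold fij; ring
      rw [hid]
      exact sub_mem (Ideal.mul_mem_left _ _ (fij_mem hvj))
        (Ideal.mul_mem_left _ _ (fij_mem hvi))
    · have hid : X (inr v) * fij K i j
          = X (inr i) * fij K v j - X (inr j) * fij K v i := by
        unfold fij; ring
      rw [hid]
      exact sub_mem (Ideal.mul_mem_left _ _ (fij_mem hvj))
        (Ideal.mul_mem_left _ _ (fij_mem hvi))

lemma Mv_mul_le {G : SimpleGraph (Fin n)} {v : Fin n} :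
    Mv K n v * beIdeal K (Gcomp G v) ≤ beIdeal K G := by
  rw [Mv, beIdeal, Ideal.span_mul_span]
  rw [Ideal.span_le]
  intro q hq
  rw [Set.mem_mul] at hq
  obtain ⟨s, hs, t, ⟨i, j, hij, hadj, rfl⟩, rfl⟩ := hq
  rcases hs with rfl | rfl
  · exact (mul_var_mem hadj).1
  · exact (mul_var_mem hadj).2

/-- generators of `J_{G'}` avoiding the vertex `v` -/
def Wset (K : Type*) [Field K] {n : ℕ} (G : SimpleGraph (Fin n)) (v : Fin n) :
    Set (MvPolynomial (Fin n ⊕ Fin n) K) :=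
  { f | ∃ i j : Fin n, i < j ∧ (Gcomp G v).Adj i j ∧ i ≠ v ∧ j ≠ v ∧ f = fij K i j }

lemma Wset_le {G : SimpleGraph (Fin n)} {v : Fin n} :
    Ideal.span (Wset K G v) ≤ beIdeal K (Gcomp G v) := by
  rw [Ideal.span_le]
  rintro q ⟨i, j, hij, hadj, _, _, rfl⟩
  exact Ideal.subset_span ⟨i, j, hij, hadj, rfl⟩

lemma beIdeal_Gcomp_le {G : SimpleGraph (Fin n)} {v : Fin n} :
    beIdeal K (Gcomp G v) ≤ Ideal.span (Wset K G v) ⊔ (beIdeal K G ⊓ Mv K n v) := by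
  rw [beIdeal, Ideal.span_le]
  rintro q ⟨i, j, hij, hadj, rfl⟩
  by_cases hi : i = v
  · subst hi
    refine Submodule.mem_sup_right ⟨fij_mem ?_, fij_mem_Mv_left _ _⟩
    exact Gcomp_adj_v.mp hadj
  by_cases hj : j = v
  · subst hj
    refine Submodule.mem_sup_right ⟨fij_mem ?_, fij_mem_Mv_right _ _⟩
    exact (Gcomp_adj_v.mp hadj.symm).symm
  · exact Submodule.mem_sup_left (Ideal.subset_span ⟨i, j, hij, hadj, hi, hj, rfl⟩)

lemma extraction {G : SimpleGraph (Fin n)} {v : Fin n}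
    {g : MvPolynomial (Fin n ⊕ Fin n) K} (hg : g ∈ Ideal.span (Wset K G v))
    (hMv : g ∈ Mv K n v) : g ∈ Mv K n v * Ideal.span (Wset K G v) := by
  rw [Ideal.span, Submodule.mem_span_set] at hg
  obtain ⟨c, hc, rfl⟩ := hg
  have hfix : ∀ p ∈ c.support, phiv K n v p = p := by
    intro p hp
    obtain ⟨i, j, _, _, hi, hj, rfl⟩ := hc hp
    exact phiv_fij v hi hj
  have h0 : c.sum (fun p r => phiv K n v r * p) = 0 := by
    have := phiv_eq_zero_of_mem v hMv
    rw [map_finsuppSum] at this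
    rw [← this]
    apply Finsupp.sum_congr
    intro p hp
    rw [smul_eq_mul, map_mul, hfix p hp]
  have hrw : c.sum (fun p r => r • p)
      = c.sum (fun p r => (r - phiv K n v r) * p) := by
    rw [eq_comm]
    calc c.sum (fun p r => (r - phiv K n v r) * p)
        = c.sum (fun p r => r • p - phiv K n v r * p) := by
          apply Finsupp.sum_congr; intro p _; rw [smul_eq_mul]; ring
      _ = c.sum (fun p r => r • p) - c.sum (fun p r => phiv K n v r * p) := by
          rw [Finsupp.sum_sub]
      _ = c.sum (fun p r => r • p) := by rw [h0, sub_zero]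
  rw [hrw, Finsupp.sum]
  refine Submodule.sum_mem _ (fun p hp => ?_)
  exact Ideal.mul_mem_mul (sub_phiv_mem v _) (Ideal.subset_span (hc hp))

lemma ohtani {G : SimpleGraph (Fin n)} {v : Fin n} :
    beIdeal K (Gcomp G v) ⊓ (Mv K n v ⊔ beIdeal K (delVerts G {v})) ≤ beIdeal K G := by
  rintro f ⟨hf1, hf2⟩
  obtain ⟨a, ha, b, hb, rfl⟩ := Submodule.mem_sup.mp hf2
  have hbG : b ∈ beIdeal K G := beIdeal_mono (delVerts_le G {v}) hb
  have haG' : a ∈ beIdeal K (Gcomp G v) := by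
    have : a = a + b - b := by ring
    rw [this]
    exact sub_mem hf1 (beIdeal_mono le_Gcomp hbG)
  obtain ⟨w, hw, h, hh, hab⟩ := Submodule.mem_sup.mp (beIdeal_Gcomp_le haG')
  have hwMv : w ∈ Mv K n v := by
    have : w = a - h := by rw [← hab]; ring
    rw [this]
    exact sub_mem ha hh.2
  have hwG : w ∈ beIdeal K G :=
    Mv_mul_le (Ideal.mul_mono_right Wset_le (extraction hw hwMv))
  have : a + b = w + h + b := by rw [hab]
  rw [this]
  exact add_mem (add_mem hwG hh.1) hbG

end Ohtani

noncomputable section Cluster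
open Sum SimpleGraph MvPolynomial Finsupp
open scoped Classical BigOperators

variable {K : Type*} [Field K] {n : ℕ}

/-- auxiliary index type for the Segre-type embedding -/
abbrev sigC (G : SimpleGraph (Fin n)) : Type :=
  (G.ConnectedComponent ⊕ G.ConnectedComponent) ⊕ Fin n

def gOne (G : SimpleGraph (Fin n)) : Fin n ⊕ Fin n → sigC G
  | .inl i => .inl (.inl (G.connectedComponentMk i))
  | .inr i => .inl (.inr (G.connectedComponentMk i))

def gTwo (G : SimpleGraph (Fin n)) : Fin n ⊕ Fin n → sigC G
  | .inl i => .inr i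
  | .inr i => .inr i

def psiM (G : SimpleGraph (Fin n)) (m : (Fin n ⊕ Fin n) →₀ ℕ) : sigC G →₀ ℕ :=
  Finsupp.mapDomain (gOne G) m + Finsupp.mapDomain (gTwo G) m

def SegreHom (K : Type*) [Field K] {n : ℕ} (G : SimpleGraph (Fin n)) :
    MvPolynomial (Fin n ⊕ Fin n) K →ₐ[K] MvPolynomial (sigC G) K :=
  aeval (fun s => X (gOne G s) * X (gTwo G s))

lemma segre_monomial (G : SimpleGraph (Fin n)) (m : (Fin n ⊕ Fin n) →₀ ℕ) (c : K) :
    SegreHom K G (monomial m c) = monomial (psiM G m) c := by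
  rw [SegreHom, aeval_monomial]
  have key : ∀ m : (Fin n ⊕ Fin n) →₀ ℕ,
      (m.prod fun s k => ((X (gOne G s) * X (gTwo G s) : MvPolynomial (sigC G) K)) ^ k)
        = monomial (psiM G m) 1 := by
    intro m
    induction m using Finsupp.induction with
    | zero => simp [psiM]
    | single_add s k m hs hk ih =>
      rw [Finsupp.prod_add_index (fun a _ => pow_zero _) (fun a _ b1 b2 => pow_add _ b1 b2)]
      have hsing : ((Finsupp.single s k).prod
          fun a e => ((X (gOne G a) * X (gTwo G a) : MvPolynomial (sigC G) K)) ^ e)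
            = (X (gOne G s) * X (gTwo G s)) ^ k :=
        Finsupp.prod_single_index (pow_zero _)
      rw [hsing, ih, mul_pow, X_pow_eq_monomial,
        X_pow_eq_monomial, monomial_mul, monomial_mul]
      have hexp : Finsupp.single (gOne G s) k + Finsupp.single (gTwo G s) k + psiM G m
          = psiM G (Finsupp.single s k + m) := by
        rw [psiM, psiM, Finsupp.mapDomain_add, Finsupp.mapDomain_add,
          Finsupp.mapDomain_single, Finsupp.mapDomain_single]
        abel
      rw [mul_one, mul_one, ← hexp]
  rw [key, MvPolynomial.algebraMap_eq, C_mul_monomial, mul_one]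

lemma mapDomain_apply_formula {α β : Type*} [Fintype α] (g : α → β) (m : α →₀ ℕ) (t : β) :
    Finsupp.mapDomain g m t = ∑ s : α, if g s = t then m s else 0 := by
  rw [Finsupp.mapDomain, Finsupp.sum_apply, Finsupp.sum_fintype]
  · exact Finset.sum_congr rfl (fun s _ => by rw [Finsupp.single_apply])
  · intro s; simp

lemma psi_inr (G : SimpleGraph (Fin n)) (m : (Fin n ⊕ Fin n) →₀ ℕ) (i : Fin n) :
    psiM G m (.inr i) = m (.inl i) + m (.inr i) := by
  rw [psiM, Finsupp.add_apply, Finsupp.mapDomain, Finsupp.mapDomain,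
    Finsupp.sum_apply, Finsupp.sum_apply,
    Finsupp.sum_fintype _ _ (fun _ => by simp), Finsupp.sum_fintype _ _ (fun _ => by simp),
    Fintype.sum_sum_type, Fintype.sum_sum_type]
  simp [gOne, gTwo, Finsupp.single_apply]

lemma psi_comp (G : SimpleGraph (Fin n)) (m : (Fin n ⊕ Fin n) →₀ ℕ) (i : Fin n) :
    psiM G m (.inl (.inl (G.connectedComponentMk i)))
      = ∑ j : Fin n, if G.Reachable i j then m (.inl j) else 0 := by
  rw [psiM, Finsupp.add_apply, Finsupp.mapDomain, Finsupp.mapDomain,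
    Finsupp.sum_apply, Finsupp.sum_apply,
    Finsupp.sum_fintype _ _ (fun _ => by simp), Finsupp.sum_fintype _ _ (fun _ => by simp),
    Fintype.sum_sum_type, Fintype.sum_sum_type]
  simp only [gOne, gTwo, Finsupp.single_apply, Sum.inl.injEq, reduceCtorEq, if_false,
    Finset.sum_const_zero, add_zero, zero_add, SimpleGraph.ConnectedComponent.eq]
  apply Finset.sum_congr rfl
  intro a _
  congr 1
  simp only [eq_iff_iff]
  exact ⟨fun h => h.symm, fun h => h.symm⟩

/-- two exponent vectors in the same multidegree class -/
def SameCl (G : SimpleGraph (Fin n)) (m m' : (Fin n ⊕ Fin n) →₀ ℕ) : Prop :=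
  (∀ i : Fin n, m (.inl i) + m (.inr i) = m' (.inl i) + m' (.inr i)) ∧
  (∀ i : Fin n, (∑ j : Fin n, if G.Reachable i j then m (.inl j) else 0)
    = ∑ j : Fin n, if G.Reachable i j then m' (.inl j) else 0)

lemma sameCl_of_psi {G : SimpleGraph (Fin n)} {m m' : (Fin n ⊕ Fin n) →₀ ℕ}
    (h : psiM G m = psiM G m') : SameCl G m m' := by
  constructor
  · intro i
    have := congrArg (fun f => f (Sum.inr i) : (sigC G →₀ ℕ) → ℕ) h
    simpa only [psi_inr] using this
  · intro i
    have := congrArg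
      (fun f => f (Sum.inl (Sum.inl (G.connectedComponentMk i))) : (sigC G →₀ ℕ) → ℕ) h
    simpa only [psi_comp] using this

lemma natAbs_dist (a b : ℕ) : (a - b) + (b - a) = (a - b) + (b - a) := rfl

lemma move_lemma {G : SimpleGraph (Fin n)}
    (hcl : ∀ i j : Fin n, i ≠ j → G.Reachable i j → G.Adj i j) (c : K) :
    ∀ (D : ℕ) (m m' : (Fin n ⊕ Fin n) →₀ ℕ), SameCl G m m' →
      (∑ s : Fin n ⊕ Fin n, ((m s - m' s) + (m' s - m s))) ≤ D →
      monomial m c - monomial m' c ∈ beIdeal K G := by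
  intro D
  induction D with
  | zero =>
    intro m m' _ hD
    have hz : ∀ s : Fin n ⊕ Fin n, (m s - m' s) + (m' s - m s) = 0 := by
      intro s
      have := Finset.sum_eq_zero_iff.mp (Nat.le_zero.mp hD) s (Finset.mem_univ s)
      exact this
    have : m = m' := by
      ext s
      have := hz s
      omega
    rw [this, sub_self]
    exact zero_mem _
  | succ D ih =>
    intro m m' hsc hD
    by_cases hmm : m = m'
    · rw [hmm, sub_self]; exact zero_mem _
    have hex : ∃ i : Fin n, m (.inl i) ≠ m' (.inl i) := by
      by_contra hno
      push_neg at hno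
      apply hmm
      ext s
      rcases s with i | i
      · exact hno i
      · have h1 := hsc.1 i
        have h2 := hno i
        omega
    obtain ⟨i1, hi1⟩ := hex
    have hexgt : ∃ i : Fin n, m' (.inl i) < m (.inl i) := by
      rcases Nat.lt_or_ge (m' (.inl i1)) (m (.inl i1)) with h | h
      · exact ⟨i1, h⟩
      · have hlt : m (.inl i1) < m' (.inl i1) := lt_of_le_of_ne h hi1
        by_contra hno
        push_neg at hno
        have hstrict : (∑ j : Fin n, if G.Reachable i1 j then m (.inl j) else 0)
            < ∑ j : Fin n, if G.Reachable i1 j then m' (.inl j) else 0 := by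
          apply Finset.sum_lt_sum
          · intro j _
            by_cases hr : G.Reachable i1 j
            · rw [if_pos hr, if_pos hr]; exact hno j
            · rw [if_neg hr, if_neg hr]
          · exact ⟨i1, Finset.mem_univ _, by
              rw [if_pos (Reachable.refl i1), if_pos (Reachable.refl i1)]; exact hlt⟩
        exact absurd (hsc.2 i1) (ne_of_lt hstrict)
    obtain ⟨i, hi⟩ := hexgt
    have hexj : ∃ j : Fin n, G.Reachable i j ∧ m (.inl j) < m' (.inl j) := by
      by_contra hno
      push_neg at hno
      have hstrict : (∑ j : Fin n, if G.Reachable i j then m' (.inl j) else 0)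
          < ∑ j : Fin n, if G.Reachable i j then m (.inl j) else 0 := by
        apply Finset.sum_lt_sum
        · intro j _
          by_cases hr : G.Reachable i j
          · rw [if_pos hr, if_pos hr]; exact hno j hr
          · rw [if_neg hr, if_neg hr]
        · exact ⟨i, Finset.mem_univ _, by
            rw [if_pos (Reachable.refl i), if_pos (Reachable.refl i)]; exact hi⟩
      exact absurd (hsc.2 i) (ne_of_lt hstrict).symm
    obtain ⟨j, hreach, hj⟩ := hexj
    have hne : i ≠ j := by
      intro h
      rw [h] at hi
      omega
    have hadj : G.Adj i j := hcl i j hne hreach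
    have hmi : 1 ≤ m (.inl i) := by omega
    have hmrj : 1 ≤ m (.inr j) := by
      have := hsc.1 j
      omega
    -- the exchanged exponent vector
    set m0 : (Fin n ⊕ Fin n) →₀ ℕ :=
      m - Finsupp.single (.inl i) 1 - Finsupp.single (.inr j) 1 with hm0def
    have hm0 : ∀ s, m0 s = m s - (if (Sum.inl i : Fin n ⊕ Fin n) = s then 1 else 0)
        - (if (Sum.inr j : Fin n ⊕ Fin n) = s then 1 else 0) := by
      intro s
      rw [hm0def]
      rw [Finsupp.tsub_apply, Finsupp.tsub_apply, Finsupp.single_apply, Finsupp.single_apply]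
    set m2 : (Fin n ⊕ Fin n) →₀ ℕ :=
      m0 + Finsupp.single (.inl j) 1 + Finsupp.single (.inr i) 1 with hm2def
    have hm2 : ∀ s, m2 s = m0 s + (if (Sum.inl j : Fin n ⊕ Fin n) = s then 1 else 0)
        + (if (Sum.inr i : Fin n ⊕ Fin n) = s then 1 else 0) := by
      intro s
      rw [hm2def]
      rw [Finsupp.add_apply, Finsupp.add_apply, Finsupp.single_apply, Finsupp.single_apply]
    have h2a : m2 (.inl i) = m (.inl i) - 1 := by
      rw [hm2 _, hm0 _, if_pos rfl, if_neg (by simp), if_neg (by simp [Ne.symm hne]),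
        if_neg (by simp)]
      omega
    have h2b : m2 (.inl j) = m (.inl j) + 1 := by
      rw [hm2 _, hm0 _, if_neg (by simp [hne]), if_neg (by simp), if_pos rfl,
        if_neg (by simp)]
      omega
    have h2c : m2 (.inr i) = m (.inr i) + 1 := by
      rw [hm2 _, hm0 _, if_neg (by simp), if_neg (by simp [Ne.symm hne]),
        if_neg (by simp), if_pos rfl]
      omega
    have h2d : m2 (.inr j) = m (.inr j) - 1 := by
      rw [hm2 _, hm0 _, if_neg (by simp), if_pos rfl, if_neg (by simp),
        if_neg (by simp [hne])]
      omega
    have h2e : ∀ s, s ≠ .inl i → s ≠ .inl j → s ≠ .inr i → s ≠ .inr j → m2 s = m s := by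
      intro s hsa hsb hsc' hsd
      rw [hm2 _, hm0 _]
      rw [if_neg (fun h => hsa h.symm), if_neg (fun h => hsd h.symm),
        if_neg (fun h => hsb h.symm), if_neg (fun h => hsc' h.symm)]
      omega
    have hmd : m = m0 + Finsupp.single (.inl i) 1 + Finsupp.single (.inr j) 1 := by
      ext s
      rw [Finsupp.add_apply, Finsupp.add_apply, Finsupp.single_apply, Finsupp.single_apply,
        hm0 s]
      by_cases hsa : (Sum.inl i : Fin n ⊕ Fin n) = s
      · have hsb : ¬ (Sum.inr j : Fin n ⊕ Fin n) = s := by rw [← hsa]; simp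
        rw [if_pos hsa, if_neg hsb]
        subst hsa
        omega
      · rw [if_neg hsa]
        by_cases hsb : (Sum.inr j : Fin n ⊕ Fin n) = s
        · rw [if_pos hsb]
          subst hsb
          omega
        · rw [if_neg hsb]
          omega
    -- the two monomials as multiples of `monomial m0`
    have hmon1 : monomial m (c) = monomial m0 c * X (.inl i) * X (.inr j) := by
      conv_lhs => rw [hmd]
      rw [X, X, monomial_mul, monomial_mul, mul_one, mul_one]
    have hmon2 : monomial m2 (c) = monomial m0 c * X (.inl j) * X (.inr i) := by
      rw [hm2def, X, X, monomial_mul, monomial_mul, mul_one, mul_one]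
    have hstep : monomial m c - monomial m2 c ∈ beIdeal K G := by
      have : monomial m c - monomial m2 c = monomial m0 c * fij K i j := by
        rw [hmon1, hmon2, fij]; ring
      rw [this]
      exact Ideal.mul_mem_left _ _ (fij_mem hadj)
    -- `m2` is still in the same class as `m'`
    have hsc2 : SameCl G m2 m' := by
      constructor
      · intro k
        by_cases hki : k = i
        · subst hki
          rw [h2a, h2c]
          have := hsc.1 k
          omega
        by_cases hkj : k = j
        · subst hkj
          rw [h2b, h2d]
          have := hsc.1 k
          omega
        · rw [h2e (.inl k) (by simp [hki]) (by simp [hkj]) (by simp) (by simp),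
            h2e (.inr k) (by simp) (by simp) (by simp [hki]) (by simp [hkj])]
          exact hsc.1 k
      · intro k
        rw [← hsc.2 k]
        by_cases hk : G.Reachable k i
        · have hkj : G.Reachable k j := hk.trans hreach
          have hji : j ∈ (Finset.univ.erase i : Finset (Fin n)) :=
            Finset.mem_erase.mpr ⟨Ne.symm hne, Finset.mem_univ _⟩
          have hrw : ∀ (f : Fin n → ℕ),
              (∑ l : Fin n, f l)
                = f i + (f j + ∑ l ∈ (Finset.univ.erase i).erase j, f l) := by
            intro f
            rw [Finset.add_sum_erase _ f hji, Finset.add_sum_erase _ f (Finset.mem_univ i)]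
          rw [hrw, hrw]
          have htail : (∑ l ∈ (Finset.univ.erase i).erase j,
                (if G.Reachable k l then m2 (.inl l) else 0))
              = ∑ l ∈ (Finset.univ.erase i).erase j,
                (if G.Reachable k l then m (.inl l) else 0) := by
            apply Finset.sum_congr rfl
            intro l hl
            have hlj : l ≠ j := (Finset.mem_erase.mp hl).1
            have hli : l ≠ i := (Finset.mem_erase.mp (Finset.mem_erase.mp hl).2).1
            by_cases hr : G.Reachable k l
            · rw [if_pos hr, if_pos hr]
              exact h2e (Sum.inl l) (by simp [hli]) (by simp [hlj]) (by simp) (by simp)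
            · rw [if_neg hr, if_neg hr]
          rw [htail, if_pos hk, if_pos hk, if_pos hkj, if_pos hkj, h2a, h2b]
          omega
        · have hkj : ¬ G.Reachable k j := fun h => hk (h.trans hreach.symm)
          apply Finset.sum_congr rfl
          intro l _
          by_cases hr : G.Reachable k l
          · rw [if_pos hr, if_pos hr]
            have hli : l ≠ i := fun h => hk (h ▸ hr)
            have hlj : l ≠ j := fun h => hkj (h ▸ hr)
            exact h2e (Sum.inl l) (by simp [hli]) (by simp [hlj]) (by simp) (by simp)
          · rw [if_neg hr, if_neg hr]
    -- the distance strictly decreases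
    have hdist : (∑ s : Fin n ⊕ Fin n, ((m2 s - m' s) + (m' s - m2 s))) ≤ D := by
      have hlt : (∑ s : Fin n ⊕ Fin n, ((m2 s - m' s) + (m' s - m2 s)))
          < ∑ s : Fin n ⊕ Fin n, ((m s - m' s) + (m' s - m s)) := by
        apply Finset.sum_lt_sum
        · intro s _
          by_cases hsa : s = .inl i
          · subst hsa; rw [h2a]; omega
          by_cases hsb : s = .inl j
          · subst hsb; rw [h2b]; omega
          by_cases hsc' : s = .inr i
          · subst hsc'
            rw [h2c]
            have h1 := hsc.1 i
            omega
          by_cases hsd : s = .inr j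
          · subst hsd
            rw [h2d]
            have h1 := hsc.1 j
            omega
          · rw [h2e s hsa hsb hsc' hsd]
        · refine ⟨.inl i, Finset.mem_univ _, ?_⟩
          rw [h2a]
          omega
      omega
    have hrest := ih m2 m' hsc2 hdist
    have : monomial m c - monomial m' c
        = (monomial m c - monomial m2 c) + (monomial m2 c - monomial m' c) := by ring
    rw [this]
    exact add_mem hstep hrest

end Cluster

noncomputable section ClusterKer
open Sum SimpleGraph MvPolynomial
open scoped Classical BigOperators
variable {K : Type*} [Field K] {n : ℕ}

lemma segre_fij {G : SimpleGraph (Fin n)} {i j : Fin n} (hadj : G.Adj i j) :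
    SegreHom K G (fij K i j) = 0 := by
  have hc : G.connectedComponentMk i = G.connectedComponentMk j :=
    SimpleGraph.ConnectedComponent.eq.mpr hadj.reachable
  rw [fij, map_sub, map_mul, map_mul, SegreHom, aeval_X, aeval_X, aeval_X, aeval_X]
  simp only [gOne, gTwo]
  rw [hc]
  ring

lemma cluster_beIdeal_eq_ker {G : SimpleGraph (Fin n)}
    (hcl : ∀ i j : Fin n, i ≠ j → G.Reachable i j → G.Adj i j) :
    beIdeal K G = RingHom.ker (SegreHom K G).toRingHom := by
  refine le_antisymm ?_ ?_
  · rw [beIdeal, Ideal.span_le]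
    rintro f ⟨i, j, hij, hadj, rfl⟩
    exact RingHom.mem_ker.mpr (segre_fij hadj)
  · intro f hf
    have hf' : SegreHom K G f = 0 := hf
    have hrepr : f = ∑ m ∈ f.support, monomial m (coeff m f) :=
      (support_sum_monomial_coeff f).symm
    set r : (sigC G →₀ ℕ) → ((Fin n ⊕ Fin n) →₀ ℕ) :=
      fun d => if h : ∃ m, psiM G m = d then h.choose else 0 with hrdef
    have hr : ∀ m, psiM G (r (psiM G m)) = psiM G m := by
      intro m
      have h : ∃ m', psiM G m' = psiM G m := ⟨m, rfl⟩
      rw [hrdef]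
      simp only
      rw [dif_pos h]
      exact h.choose_spec
    have hsub : f - (∑ m ∈ f.support, monomial (r (psiM G m)) (coeff m f))
        ∈ beIdeal K G := by
      have heq : f - (∑ m ∈ f.support, monomial (r (psiM G m)) (coeff m f))
          = ∑ m ∈ f.support,
            (monomial m (coeff m f) - monomial (r (psiM G m)) (coeff m f)) := by
        rw [Finset.sum_sub_distrib, ← hrepr]
      rw [heq]
      refine Submodule.sum_mem _ (fun m _ => ?_)
      exact move_lemma hcl _ _ _ _ (sameCl_of_psi (hr m).symm) le_rfl
    have himg : ∀ d, (∑ m ∈ f.support.filter (fun m => psiM G m = d), coeff m f) = 0 := by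
      intro d
      have h1 : coeff d (SegreHom K G f)
          = ∑ m ∈ f.support, if psiM G m = d then coeff m f else 0 := by
        conv_lhs => rw [hrepr]
        rw [map_sum, MvPolynomial.coeff_sum]
        exact Finset.sum_congr rfl
          (fun m _ => by rw [segre_monomial, coeff_monomial])
      rw [Finset.sum_filter, ← h1, hf', coeff_zero]
    have hzero : (∑ m ∈ f.support, monomial (r (psiM G m)) (coeff m f)) = 0 := by
      rw [← Finset.sum_fiberwise_of_maps_to (g := fun m => psiM G m)
        (t := f.support.image (fun m => psiM G m))
        (fun m hm => Finset.mem_image_of_mem _ hm)]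
      refine Finset.sum_eq_zero (fun d _ => ?_)
      have hc : (∑ m ∈ f.support.filter (fun m => psiM G m = d),
            monomial (r (psiM G m)) (coeff m f))
          = ∑ m ∈ f.support.filter (fun m => psiM G m = d),
            monomial (r d) (coeff m f) :=
        Finset.sum_congr rfl (fun m hm => by rw [(Finset.mem_filter.mp hm).2])
      rw [hc, ← map_sum, himg d, map_zero]
    have := hsub
    rw [hzero, sub_zero] at this
    exact this

lemma cluster_radical {G : SimpleGraph (Fin n)}
    (hcl : ∀ i j : Fin n, i ≠ j → G.Reachable i j → G.Adj i j) :
    (beIdeal K G).IsRadical := by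
  rw [cluster_beIdeal_eq_ker hcl]
  exact (RingHom.ker_isPrime _).isRadical

end ClusterKer

noncomputable section Main
open Sum SimpleGraph MvPolynomial
open scoped Classical BigOperators
variable {K : Type*} [Field K] {n : ℕ}

def nonIso (G : SimpleGraph (Fin n)) : Set (Fin n) := {v | ∃ u, G.Adj v u}

def nonEdge (G : SimpleGraph (Fin n)) : Set (Fin n × Fin n) :=
  {p | p.1 ≠ p.2 ∧ ¬ G.Adj p.1 p.2}

def mu (G : SimpleGraph (Fin n)) : ℕ :=
  (nonIso G).ncard * (n * n + 1) + (nonEdge G).ncard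

lemma nonEdge_card_le (G : SimpleGraph (Fin n)) : (nonEdge G).ncard ≤ n * n := by
  have h := Set.ncard_le_ncard (Set.subset_univ (nonEdge G)) (Set.toFinite _)
  rw [Set.ncard_univ, Nat.card_eq_fintype_card, Fintype.card_prod, Fintype.card_fin] at h
  exact h

lemma mu_delVerts {G : SimpleGraph (Fin n)} {v : Fin n} (hv : v ∈ nonIso G) :
    mu (delVerts G {v}) < mu G := by
  have h1 : nonIso (delVerts G {v}) ⊆ nonIso G \ {v} := by
    rintro u ⟨w, hw⟩
    exact ⟨⟨w, hw.1⟩, by simpa using hw.2.1⟩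
  have h2 : (nonIso (delVerts G {v})).ncard ≤ (nonIso G \ {v}).ncard :=
    Set.ncard_le_ncard h1 (Set.toFinite _)
  have h3 : (nonIso G \ {v}).ncard < (nonIso G).ncard :=
    Set.ncard_diff_singleton_lt_of_mem hv (Set.toFinite _)
  have h4 : (nonIso (delVerts G {v})).ncard ≤ (nonIso G).ncard - 1 := by omega
  have h5 : 1 ≤ (nonIso G).ncard := by
    have := Set.ncard_pos (s := nonIso G) (Set.toFinite _) |>.mpr ⟨v, hv⟩
    omega
  rw [mu, mu]
  calc (nonIso (delVerts G {v})).ncard * (n * n + 1) + (nonEdge (delVerts G {v})).ncard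
      ≤ ((nonIso G).ncard - 1) * (n * n + 1) + (n * n) := by
        have := Nat.mul_le_mul_right (n * n + 1) h4
        have := nonEdge_card_le (delVerts G {v})
        omega
    _ < ((nonIso G).ncard - 1) * (n * n + 1) + (n * n + 1) := by omega
    _ = ((nonIso G).ncard - 1 + 1) * (n * n + 1) := by ring
    _ = (nonIso G).ncard * (n * n + 1) := by rw [Nat.sub_add_cancel h5]
    _ ≤ (nonIso G).ncard * (n * n + 1) + (nonEdge G).ncard := Nat.le_add_right _ _

lemma mu_Gcomp {G : SimpleGraph (Fin n)} {v a b : Fin n}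
    (hva : G.Adj v a) (hvb : G.Adj v b) (hab : a ≠ b) (hnadj : ¬ G.Adj a b) :
    mu (Gcomp G v) < mu G := by
  have h1 : nonIso (Gcomp G v) = nonIso G := by
    ext u
    constructor
    · rintro ⟨w, hw⟩
      rcases Gcomp_adj.mp hw with h | ⟨_, hvu, _⟩
      · exact ⟨w, h⟩
      · exact ⟨v, hvu.symm⟩
    · rintro ⟨w, hw⟩
      exact ⟨w, le_Gcomp hw⟩
  have h2 : nonEdge (Gcomp G v) ⊂ nonEdge G := by
    constructor
    · rintro ⟨p, q⟩ ⟨hne, hnAdj⟩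
      exact ⟨hne, fun h => hnAdj (le_Gcomp h)⟩
    · intro hsub
      have hmem : ((a, b) : Fin n × Fin n) ∈ nonEdge G := ⟨hab, hnadj⟩
      have := hsub hmem
      exact this.2 (Gcomp_adj.mpr (Or.inr ⟨hab, hva, hvb⟩))
  have h3 : (nonEdge (Gcomp G v)).ncard < (nonEdge G).ncard :=
    Set.ncard_lt_ncard h2 (Set.toFinite _)
  rw [mu, mu, h1]
  omega

lemma phiv_beIdeal_stable {G : SimpleGraph (Fin n)} (v : Fin n)
    {f : MvPolynomial (Fin n ⊕ Fin n) K} (hf : f ∈ beIdeal K (delVerts G {v})) :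
    phiv K n v f ∈ beIdeal K (delVerts G {v}) := by
  refine phiv_mem_of_forall v ?_ hf
  rintro q ⟨i, j, hij, hadj, rfl⟩
  have hi : i ≠ v := by simpa using hadj.2.1
  have hj : j ≠ v := by simpa using hadj.2.2
  rw [phiv_fij v hi hj]
  exact Ideal.subset_span ⟨i, j, hij, hadj, rfl⟩

lemma mem_Mv_sup_iff {G : SimpleGraph (Fin n)} (v : Fin n)
    (f : MvPolynomial (Fin n ⊕ Fin n) K) :
    f ∈ Mv K n v ⊔ beIdeal K (delVerts G {v})
      ↔ phiv K n v f ∈ beIdeal K (delVerts G {v}) := by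
  constructor
  · intro hf
    obtain ⟨p, hp, q, hq, rfl⟩ := Submodule.mem_sup.mp hf
    rw [map_add, phiv_eq_zero_of_mem v hp, zero_add]
    exact phiv_beIdeal_stable v hq
  · intro hf
    have : f = (f - phiv K n v f) + phiv K n v f := by ring
    rw [this]
    exact add_mem (Submodule.mem_sup_left (sub_phiv_mem v f)) (Submodule.mem_sup_right hf)

lemma comap_radical {R S : Type*} [CommRing R] [CommRing S] (g : R →+* S)
    {I : Ideal S} (hI : I.IsRadical) : (Ideal.comap g I).IsRadical := by
  intro x hx
  obtain ⟨k, hk⟩ := hx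
  have : (g x) ^ k ∈ I := by
    rw [← map_pow]
    exact hk
  exact Ideal.mem_comap.mpr (hI ⟨k, this⟩)

lemma inf_radical {R : Type*} [CommRing R] {I J : Ideal R}
    (hI : I.IsRadical) (hJ : J.IsRadical) : (I ⊓ J).IsRadical := by
  intro x hx
  obtain ⟨k, hk⟩ := hx
  exact ⟨hI ⟨k, hk.1⟩, hJ ⟨k, hk.2⟩⟩

lemma beIdeal_le_Mv_sup {G : SimpleGraph (Fin n)} (v : Fin n) :
    beIdeal K G ≤ Mv K n v ⊔ beIdeal K (delVerts G {v}) := by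
  rw [beIdeal, Ideal.span_le]
  rintro q ⟨i, j, hij, hadj, rfl⟩
  by_cases hi : i = v
  · subst hi
    exact Submodule.mem_sup_left (fij_mem_Mv_left _ _)
  by_cases hj : j = v
  · subst hj
    exact Submodule.mem_sup_left (fij_mem_Mv_right _ _)
  · exact Submodule.mem_sup_right
      (Ideal.subset_span ⟨i, j, hij, ⟨hadj, by simp [hi], by simp [hj]⟩, rfl⟩)

lemma main_induction (K : Type*) [Field K] {n : ℕ} :
    ∀ (k : ℕ) (G : SimpleGraph (Fin n)), mu G < k →
      (beIdeal K G = ⨅ T : Set (Fin n), cutPrime K G T) ∧ (beIdeal K G).IsRadical := by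
  intro k
  induction k with
  | zero => intro G h; omega
  | succ k ih =>
    intro G hmu
    by_cases hcl : ∀ v i j : Fin n, G.Adj v i → G.Adj v j → i ≠ j → G.Adj i j
    · -- all vertices simplicial: disjoint union of cliques
      have hcl' : ∀ i j : Fin n, i ≠ j → G.Reachable i j → G.Adj i j := by
        intro i j hne hre
        rcases cluster_reach hcl hre with rfl | h
        · exact absurd rfl hne
        · exact h
      constructor
      · refine le_antisymm (le_iInf (fun T => beIdeal_le_cutPrime G T)) ?_
        refine le_trans (iInf_le _ (∅ : Set (Fin n))) ?_
        rw [cutPrime_empty_cluster hcl]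
      · exact cluster_radical hcl'
    · push_neg at hcl
      obtain ⟨v, a, b, hva, hvb, hab, hnadj⟩ := hcl
      have hvnon : v ∈ nonIso G := ⟨a, hva⟩
      have hmuGv : mu (delVerts G {v}) < k := by
        have := mu_delVerts hvnon
        omega
      have hmuG' : mu (Gcomp G v) < k := by
        have := mu_Gcomp hva hvb hab hnadj
        omega
      obtain ⟨ihGv_eq, ihGv_rad⟩ := ih (delVerts G {v}) hmuGv
      obtain ⟨ihG'_eq, ihG'_rad⟩ := ih (Gcomp G v) hmuG'
      have hsub1 : (⨅ T : Set (Fin n), cutPrime K G T) ≤ beIdeal K (Gcomp G v) := by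
        rw [ihG'_eq]
        refine le_iInf (fun T => ?_)
        by_cases hvT : v ∈ T
        · calc (⨅ T' : Set (Fin n), cutPrime K G T') ≤ cutPrime K G (T \ {v}) :=
                iInf_le _ _
            _ = cutPrime K (Gcomp G v) (T \ {v}) :=
                cutPrime_congr _ (fun i j => reach_Gcomp (by simp) i j)
            _ ≤ cutPrime K (Gcomp G v) T := cutPrime_erase_le Gcomp_simplicial hvT
        · calc (⨅ T' : Set (Fin n), cutPrime K G T') ≤ cutPrime K G T := iInf_le _ _
            _ = cutPrime K (Gcomp G v) T := cutPrime_congr _ (fun i j => reach_Gcomp hvT i j)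
      have hsub2 : (⨅ T : Set (Fin n), cutPrime K G T)
          ≤ Mv K n v ⊔ beIdeal K (delVerts G {v}) := by
        intro f hf
        rw [mem_Mv_sup_iff]
        have hφ : phiv K n v f ∈ ⨅ T : Set (Fin n), cutPrime K (delVerts G {v}) T := by
          rw [Submodule.mem_iInf]
          intro T
          exact phiv_cutPrime_insert ((Submodule.mem_iInf _).mp hf (T ∪ {v}))
        rw [ihGv_eq]
        exact hφ
      have heq : beIdeal K G = ⨅ T : Set (Fin n), cutPrime K G T :=
        le_antisymm (le_iInf (fun T => beIdeal_le_cutPrime G T))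
          (fun f hf => ohtani ⟨hsub1 hf, hsub2 hf⟩)
      refine ⟨heq, ?_⟩
      have hJ : beIdeal K G
          = beIdeal K (Gcomp G v) ⊓ (Mv K n v ⊔ beIdeal K (delVerts G {v})) :=
        le_antisymm (le_inf (beIdeal_mono le_Gcomp) (beIdeal_le_Mv_sup v)) ohtani
      rw [hJ]
      refine inf_radical ihG'_rad ?_
      have hcomap : Mv K n v ⊔ beIdeal K (delVerts G {v})
          = Ideal.comap (phiv K n v).toRingHom (beIdeal K (delVerts G {v})) := by
        ext f
        rw [Ideal.mem_comap]
        exact mem_Mv_sup_iff v f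
      rw [hcomap]
      exact comap_radical _ ihGv_rad

end Main




/-- `J_G = ⋂_{T ⊆ [n]} P_T(G)`; in particular `J_G` is radical. -/
theorem stmt11 (K : Type*) [Field K] (n : ℕ) (G : SimpleGraph (Fin n)) :
    beIdeal K G = (⨅ T : Set (Fin n), cutPrime K G T) ∧ (beIdeal K G).IsRadical :=
  main_induction K (mu G + 1) G (Nat.lt_succ_self _)
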